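/- Let S be a set of points in general position in the plane, and let a, b ∈ S be two vertices of the boundary of the convex hull of S such that one of the two open halfplanes bounded by the line through a and b contains exactly 3 points of S and the other open halfplane contains at least 1 point of S. Then there do not exist two plane Hamiltonian paths π1, π2 on S whose set of common edges is exactly the segment ab. -/

import Mathlib

open Set
open scoped Classical

noncomputable section

/-- Points in the plane. -/
abbrev Pt : Type := ℝ × ℝ

/-- Orientation determinant of the triple `(a, b, p)`:
positive iff `p` lies strictly to the left of the directed line from `a` to `b`. -/
def det3 (a b p : Pt) : ℝ :=
  (b.1 - a.1) * (p.2 - a.2) - (b.2 - a.2) * (p.1 - a.1)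

/-- A finite point set is in general position if no three of its points are collinear. -/
def GenPos (S : Finset Pt) : Prop :=
  ∀ p ∈ S, ∀ q ∈ S, ∀ r ∈ S,
    p ≠ q → p ≠ r → q ≠ r → ¬ Collinear ℝ ({p, q, r} : Set Pt)

/-- The list of (directed) edges of a polygonal path given by its list of vertices. -/
def edgeList (l : List Pt) : List (Pt × Pt) := l.zip l.tail

/-- The segment `ab` is an edge of the path `l`, i.e. `a` and `b` are consecutive on `l`. -/
def IsEdgeOf (a b : Pt) (l : List Pt) : Prop :=
  (a, b) ∈ edgeList l ∨ (b, a) ∈ edgeList l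

/-- `l` is a plane (crossing-free) Hamiltonian path on the point set `S`:
its vertices are exactly the points of `S`, each visited once, and any two distinct
edges intersect only in common endpoints. -/
def PlanePath (S : Finset Pt) (l : List Pt) : Prop :=
  l.Nodup ∧ l.toFinset = S ∧
  ∀ e ∈ edgeList l, ∀ f ∈ edgeList l, e ≠ f →
    segment ℝ e.1 e.2 ∩ segment ℝ f.1 f.2 ⊆
      (({e.1, e.2} : Set Pt) ∩ ({f.1, f.2} : Set Pt))

/-- Two paths are edge-disjoint: no segment is an edge of both. -/
def EdgeDisjoint (l₁ l₂ : List Pt) : Prop :=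
  ∀ x y : Pt, IsEdgeOf x y l₁ → ¬ IsEdgeOf x y l₂

/-- `p` is a vertex of the boundary of the convex hull of `S`. -/
def HullVertex (S : Finset Pt) (p : Pt) : Prop :=
  p ∈ Set.extremePoints ℝ (convexHull ℝ (S : Set Pt))

/-- `ab` is an edge of the boundary of the convex hull of `S`, i.e. `a` and `b` are
consecutive hull vertices: all other points of `S` lie strictly on one side of line `ab`. -/
def IsHullEdge (S : Finset Pt) (a b : Pt) : Prop :=
  a ∈ S ∧ b ∈ S ∧ a ≠ b ∧
  ((∀ p ∈ S, p ≠ a → p ≠ b → 0 < det3 a b p) ∨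
   (∀ p ∈ S, p ≠ a → p ≠ b → det3 a b p < 0))

/-- The segment `xy` is a bridge over the line through `a` and `b`:
it crosses the line `ℓ(ab)` but not the segment `ab`. -/
def IsBridge (a b x y : Pt) : Prop :=
  det3 a b x * det3 a b y < 0 ∧ segment ℝ x y ∩ segment ℝ a b = ∅

/-- The set of common edges of the two paths is exactly the segment `ab`. -/
def SharesExactly (a b : Pt) (l₁ l₂ : List Pt) : Prop :=
  IsEdgeOf a b l₁ ∧ IsEdgeOf a b l₂ ∧
  ∀ x y : Pt, IsEdgeOf x y l₁ → IsEdgeOf x y l₂ → ({x, y} : Set Pt) = ({a, b} : Set Pt)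

lemma det3_swap (a b p : Pt) : det3 b a p = - det3 a b p := by unfold det3; ring
lemma det3_aa (a b : Pt) : det3 a b a = 0 := by unfold det3; ring
lemma det3_bb (a b : Pt) : det3 a b b = 0 := by unfold det3; ring

lemma det3_comb (a b x y : Pt) (t : ℝ) :
    det3 a b ((1-t) • x + t • y) = (1-t) * det3 a b x + t * det3 a b y := by
  unfold det3
  simp only [Prod.fst_add, Prod.snd_add, Prod.smul_fst, Prod.smul_snd, smul_eq_mul]
  ring

lemma det3_param {a b z : Pt} (hab : a ≠ b) (hz : det3 a b z = 0) :
    ∃ s : ℝ, z = (1 - s) • a + s • b := by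
  have key : (b.1 - a.1) * (z.2 - a.2) = (b.2 - a.2) * (z.1 - a.1) := by
    unfold det3 at hz; linarith
  by_cases h1 : b.1 - a.1 = 0
  · have h2 : b.2 - a.2 ≠ 0 := by
      intro h2
      exact hab (Prod.ext_iff.mpr ⟨by linarith, by linarith⟩)
    refine ⟨(z.2 - a.2)/(b.2 - a.2), Prod.ext_iff.mpr ⟨?_, ?_⟩⟩
    · simp only [Prod.fst_add, Prod.smul_fst, smul_eq_mul]
      have : z.1 - a.1 = 0 := by
        rcases mul_eq_zero.mp (by rw [← key, h1, zero_mul]) with h | h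
        · exact absurd h h2
        · exact h
      field_simp
      linarith [this, h1]
    · simp only [Prod.snd_add, Prod.smul_snd, smul_eq_mul]
      field_simp
      ring
  · refine ⟨(z.1 - a.1)/(b.1 - a.1), Prod.ext_iff.mpr ⟨?_, ?_⟩⟩
    · simp only [Prod.fst_add, Prod.smul_fst, smul_eq_mul]
      field_simp
      ring
    · simp only [Prod.snd_add, Prod.smul_snd, smul_eq_mul]
      field_simp
      linear_combination key

lemma collinear_of_det3 {a b p : Pt} (hab : a ≠ b) (h : det3 a b p = 0) :
    Collinear ℝ ({a, b, p} : Set Pt) := by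
  obtain ⟨s, hs⟩ := det3_param hab h
  rw [collinear_iff_of_mem (Set.mem_insert a _)]
  refine ⟨b - a, ?_⟩
  intro q hq
  rcases hq with rfl | hq
  · exact ⟨0, by simp⟩
  · rcases hq with rfl | hq
    · exact ⟨1, by simp⟩
    · rcases hq with rfl
      refine ⟨s, ?_⟩
      rw [hs]
      apply Prod.ext_iff.mpr
      constructor <;>
        simp only [Prod.fst_add, Prod.snd_add, Prod.smul_fst, Prod.smul_snd, smul_eq_mul,
          Prod.fst_sub, Prod.snd_sub, vadd_eq_add] <;> ring

lemma mem_seg_of_det3_zero {S : Finset Pt} {a b z : Pt} (hab : a ≠ b)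
    (hav : HullVertex S a) (hbv : HullVertex S b)
    (hzc : z ∈ convexHull ℝ (S : Set Pt)) (h0 : det3 a b z = 0) :
    z ∈ segment ℝ a b := by
  obtain ⟨s, hs⟩ := det3_param hab h0
  have haA : a ∈ convexHull ℝ (S : Set Pt) := (mem_extremePoints.mp hav).1
  have hbA : b ∈ convexHull ℝ (S : Set Pt) := (mem_extremePoints.mp hbv).1
  rcases le_or_gt 0 s with hs0 | hs0
  · rcases le_or_gt s 1 with hs1 | hs1
    · exact ⟨1 - s, s, by linarith, hs0, by ring, hs.symm⟩
    · exfalso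
      have hsne : s ≠ 0 := by linarith
      have hbmem : b ∈ openSegment ℝ a z := by
        refine ⟨(s-1)/s, 1/s, div_pos (by linarith) (by linarith),
          div_pos one_pos (by linarith), ?_, ?_⟩
        · field_simp
          ring
        · rw [hs]
          apply Prod.ext_iff.mpr
          constructor <;>
            simp only [Prod.fst_add, Prod.snd_add, Prod.smul_fst, Prod.smul_snd, smul_eq_mul] <;>
            (field_simp; try ring)
      exact hab ((mem_extremePoints.mp hbv).2 a haA z hzc hbmem).1
  · exfalso
    have h1s : (1:ℝ) - s ≠ 0 := by linarith
    have hamem : a ∈ openSegment ℝ z b := by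
      refine ⟨1/(1-s), -s/(1-s), div_pos one_pos (by linarith),
        div_pos (by linarith) (by linarith), ?_, ?_⟩
      · field_simp
        ring
      · rw [hs]
        apply Prod.ext_iff.mpr
        constructor <;>
          simp only [Prod.fst_add, Prod.snd_add, Prod.smul_fst, Prod.smul_snd, smul_eq_mul] <;>
          (field_simp; try ring)
    exact hab ((mem_extremePoints.mp hav).2 z hzc b hbA hamem).2.symm

lemma mem_edgeList_iff {x y : Pt} : ∀ {l : List Pt},
    (x, y) ∈ edgeList l ↔ ∃ P Q, l = P ++ x :: y :: Q := by
  intro l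
  induction l with
  | nil =>
    constructor
    · intro h; simp [edgeList] at h
    · rintro ⟨P, Q, h⟩; cases P <;> simp_all
  | cons c t ih =>
    cases t with
    | nil =>
      constructor
      · intro h; simp [edgeList] at h
      · rintro ⟨P, Q, h⟩
        cases P with
        | nil => simp_all
        | cons p P' => cases P' <;> simp_all
    | cons d t' =>
      have hE : edgeList (c :: d :: t') = (c, d) :: edgeList (d :: t') := rfl
      constructor
      · intro h
        rw [hE, List.mem_cons] at h
        rcases h with h | h
        · rw [Prod.ext_iff] at h
          obtain ⟨h1, h2⟩ := h
          subst h1; subst h2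
          exact ⟨[], t', rfl⟩
        · obtain ⟨P, Q, hPQ⟩ := ih.1 h
          exact ⟨c :: P, Q, by rw [List.cons_append, hPQ]⟩
      · rintro ⟨P, Q, hPQ⟩
        rw [hE]
        cases P with
        | nil =>
          simp only [List.nil_append] at hPQ
          injection hPQ with h1 h2
          injection h2 with h2 h3
          subst h1; subst h2
          exact List.mem_cons_self
        | cons p P' =>
          rw [List.cons_append] at hPQ
          injection hPQ with h1 h2
          exact List.mem_cons_of_mem _ (ih.2 ⟨P', Q, h2⟩)

lemma allPos (f : Pt → ℝ) : ∀ (M : List Pt) (c : Pt),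
    (∀ x y, (x, y) ∈ edgeList (c :: M) → ¬ (f x * f y < 0)) →
    (∀ x ∈ c :: M, f x ≠ 0) → 0 < f c → ∀ y ∈ c :: M, 0 < f y := by
  intro M
  induction M with
  | nil =>
    intro c _ _ hc y hy
    simp only [List.mem_singleton] at hy
    subst hy; exact hc
  | cons d M' ih =>
    intro c hcross hne hc y hy
    have hcd : ¬ (f c * f d < 0) := hcross c d (List.mem_cons_self)
    have hd0 : f d ≠ 0 := hne d (by simp)
    have hd : 0 < f d := by
      rcases hd0.lt_or_gt with h | h
      · exact absurd (mul_neg_of_pos_of_neg hc h) hcd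
      · exact h
    rcases List.mem_cons.1 hy with rfl | hy'
    · exact hc
    · exact ih d (fun x y hxy => hcross x y (List.mem_cons_of_mem _ hxy))
        (fun x hx => hne x (List.mem_cons_of_mem _ hx)) hd y hy'

lemma signConst (f : Pt → ℝ) (c : Pt) (M : List Pt)
    (hcross : ∀ x y, (x, y) ∈ edgeList (c :: M) → ¬ (f x * f y < 0))
    (hne : ∀ x ∈ c :: M, f x ≠ 0) :
    (∀ x ∈ c :: M, 0 < f x) ∨ (∀ x ∈ c :: M, f x < 0) := by
  rcases (hne c (by simp)).lt_or_gt with h | h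
  · right
    intro x hx
    have := allPos (fun p => - f p) M c
      (fun x y hxy => by
        simpa only [neg_mul_neg] using hcross x y hxy)
      (fun x hx => by simpa using hne x hx) (by simpa using h) x hx
    simp only [neg_pos] at this
    exact this
  · left; exact allPos f M c hcross hne h

lemma block_aux {S : Finset Pt} {a b : Pt} {l M : List Pt}
    (hM : M.Nodup)
    (hMS : ∀ x ∈ M, x ∈ S)
    (hMedge : ∀ x y, (x, y) ∈ edgeList M → (x, y) ∈ edgeList l)
    (hMpos : ∀ x ∈ M, 0 < det3 a b x)
    (hMall : ∀ x ∈ S, 0 < det3 a b x → x ∈ M)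
    (hL : (S.filter (fun p => 0 < det3 a b p)).card = 3) :
    ∃ m ∈ S, 0 < det3 a b m ∧ ∀ x ∈ S, 0 < det3 a b x → x ≠ m → IsEdgeOf m x l := by
  have hMfin : M.toFinset = S.filter (fun p => 0 < det3 a b p) := by
    ext x
    simp only [List.mem_toFinset, Finset.mem_filter]
    exact ⟨fun hx => ⟨hMS x hx, hMpos x hx⟩, fun ⟨h1, h2⟩ => hMall x h1 h2⟩
  have hlen : M.length = 3 := by
    have := List.toFinset_card_of_nodup hM
    rw [hMfin, hL] at this
    omega
  obtain ⟨p, q, r, rfl⟩ := List.length_eq_three.mp hlen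
  have hpq : (p, q) ∈ edgeList l := hMedge p q (mem_edgeList_iff.mpr ⟨[], [r], rfl⟩)
  have hqr : (q, r) ∈ edgeList l := hMedge q r (mem_edgeList_iff.mpr ⟨[p], [], rfl⟩)
  refine ⟨q, hMS q (by simp), hMpos q (by simp), ?_⟩
  intro x hxS hxpos hxq
  have hxM : x = p ∨ x = q ∨ x = r := by simpa using hMall x hxS hxpos
  rcases hxM with rfl | rfl | rfl
  · exact Or.inr hpq
  · exact absurd rfl hxq
  · exact Or.inl hqr

lemma block {S : Finset Pt} {a b : Pt} {l : List Pt}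
    (hnd : l.Nodup) (hS : l.toFinset = S)
    (hedge : IsEdgeOf a b l)
    (hcross : ∀ x y, (x, y) ∈ edgeList l → ¬ (det3 a b x * det3 a b y < 0))
    (hne : ∀ p ∈ S, p ≠ a → p ≠ b → det3 a b p ≠ 0)
    (hLne : ∃ p ∈ S, 0 < det3 a b p) (hRne : ∃ p ∈ S, det3 a b p < 0)
    (hL : (S.filter (fun p => 0 < det3 a b p)).card = 3) :
    ∃ m ∈ S, 0 < det3 a b m ∧ ∀ x ∈ S, 0 < det3 a b x → x ≠ m → IsEdgeOf m x l := by
  have main : ∀ u v : Pt, det3 a b u = 0 → det3 a b v = 0 →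
      (∀ p ∈ S, p ≠ u → p ≠ v → det3 a b p ≠ 0) →
      ∀ P Q : List Pt, l = P ++ u :: v :: Q →
      ∃ m ∈ S, 0 < det3 a b m ∧ ∀ x ∈ S, 0 < det3 a b x → x ≠ m → IsEdgeOf m x l := by
    intro u v hu0 hv0 hne' P Q hl
    have hmemS : ∀ x ∈ l, x ∈ S := fun x hx => by
      rw [← hS]; exact List.mem_toFinset.mpr hx
    have hndP : P.Nodup ∧ (u :: v :: Q).Nodup ∧ P.Disjoint (u :: v :: Q) := by
      rw [hl] at hnd
      exact List.nodup_append'.mp hnd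
    -- members of P are nonzero
    have hPne : ∀ x ∈ P, det3 a b x ≠ 0 := by
      intro x hx
      refine hne' x (hmemS x (by rw [hl]; exact List.mem_append_left _ hx)) ?_ ?_
      · intro h; exact hndP.2.2 hx (by rw [h]; exact List.mem_cons_self)
      · intro h; exact hndP.2.2 hx (by rw [h]; simp)
    have hQne : ∀ x ∈ Q, det3 a b x ≠ 0 := by
      intro x hx
      have huQ : u ∉ Q := fun h => (List.nodup_cons.mp hndP.2.1).1 (List.mem_cons_of_mem _ h)
      have hvQ : v ∉ Q := (List.nodup_cons.mp (List.nodup_cons.mp hndP.2.1).2).1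
      refine hne' x (hmemS x (by rw [hl]; refine List.mem_append_right _ ?_; simp [hx])) ?_ ?_
      · intro h; exact huQ (h ▸ hx)
      · intro h; exact hvQ (h ▸ hx)
    -- edge inclusions
    have hPedge : ∀ x y : Pt, (x, y) ∈ edgeList P → (x, y) ∈ edgeList l := by
      intro x y hxy
      obtain ⟨A, B, hAB⟩ := mem_edgeList_iff.mp hxy
      exact mem_edgeList_iff.mpr ⟨A, B ++ u :: v :: Q, by rw [hl, hAB]; simp⟩
    have hQedge : ∀ x y : Pt, (x, y) ∈ edgeList Q → (x, y) ∈ edgeList l := by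
      intro x y hxy
      obtain ⟨A, B, hAB⟩ := mem_edgeList_iff.mp hxy
      exact mem_edgeList_iff.mpr ⟨P ++ u :: v :: A, B, by rw [hl, hAB]; simp⟩
    -- sign constancy
    have hPsc : (∀ x ∈ P, 0 < det3 a b x) ∨ (∀ x ∈ P, det3 a b x < 0) := by
      cases P with
      | nil => left; intro x hx; simp at hx
      | cons c P' =>
        exact signConst (det3 a b) c P' (fun x y hxy => hcross x y (hPedge x y hxy)) hPne
    have hQsc : (∀ x ∈ Q, 0 < det3 a b x) ∨ (∀ x ∈ Q, det3 a b x < 0) := by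
      cases Q with
      | nil => left; intro x hx; simp at hx
      | cons c Q' =>
        exact signConst (det3 a b) c Q' (fun x y hxy => hcross x y (hQedge x y hxy)) hQne
    -- locate points
    have hloc : ∀ x ∈ S, det3 a b x ≠ 0 → x ∈ P ∨ x ∈ Q := by
      intro x hxS hx0
      have hxl : x ∈ l := by rw [← List.mem_toFinset, hS]; exact hxS
      rw [hl] at hxl
      rcases List.mem_append.mp hxl with h | h
      · exact Or.inl h
      · have h' : x = u ∨ x = v ∨ x ∈ Q := by simpa using h
        rcases h' with rfl | rfl | h'
        · exact absurd hu0 hx0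
        · exact absurd hv0 hx0
        · exact Or.inr h'
    obtain ⟨pL, hpLS, hpL⟩ := hLne
    obtain ⟨pR, hpRS, hpR⟩ := hRne
    have hPQ : (∀ x ∈ P, 0 < det3 a b x) ∧ (∀ x ∈ Q, det3 a b x < 0) ∨
        (∀ x ∈ P, det3 a b x < 0) ∧ (∀ x ∈ Q, 0 < det3 a b x) := by
      rcases hPsc with hP | hP <;> rcases hQsc with hQ | hQ
      · exfalso
        rcases hloc pR hpRS (ne_of_lt hpR) with h | h
        · linarith [hP pR h]
        · linarith [hQ pR h]
      · exact Or.inl ⟨hP, hQ⟩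
      · exact Or.inr ⟨hP, hQ⟩
      · exfalso
        rcases hloc pL hpLS (ne_of_gt hpL) with h | h
        · linarith [hP pL h]
        · linarith [hQ pL h]
    rcases hPQ with ⟨hP, hQ⟩ | ⟨hP, hQ⟩
    · refine block_aux hndP.1 (fun x hx => hmemS x (by rw [hl]; exact List.mem_append_left _ hx))
        hPedge hP ?_ hL
      intro x hxS hxpos
      rcases hloc x hxS (ne_of_gt hxpos) with h | h
      · exact h
      · linarith [hQ x h]
    · refine block_aux (List.nodup_cons.mp (List.nodup_cons.mp hndP.2.1).2).2
        (fun x hx => hmemS x (by rw [hl]; refine List.mem_append_right _ ?_; simp [hx]))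
        hQedge hQ ?_ hL
      intro x hxS hxpos
      rcases hloc x hxS (ne_of_gt hxpos) with h | h
      · linarith [hP x h]
      · exact h
  rcases hedge with h | h
  · obtain ⟨P, Q, hl⟩ := mem_edgeList_iff.mp h
    exact main a b (by unfold det3; ring) (by unfold det3; ring) hne P Q hl
  · obtain ⟨P, Q, hl⟩ := mem_edgeList_iff.mp h
    exact main b a (by unfold det3; ring) (by unfold det3; ring)
      (fun p hp h1 h2 => hne p hp h2 h1) P Q hl

lemma no_cross {S : Finset Pt} {a b : Pt} {l : List Pt}
    (hpp : PlanePath S l) (hedge : IsEdgeOf a b l)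
    (hab : a ≠ b) (hav : HullVertex S a) (hbv : HullVertex S b) :
    ∀ x y, (x, y) ∈ edgeList l → ¬ (det3 a b x * det3 a b y < 0) := by
  intro x y hxy hd
  obtain ⟨hnd, hS, hplane⟩ := hpp
  have hx0 : det3 a b x ≠ 0 := fun h => by rw [h, zero_mul] at hd; exact lt_irrefl 0 hd
  have hy0 : det3 a b y ≠ 0 := fun h => by rw [h, mul_zero] at hd; exact lt_irrefl 0 hd
  obtain ⟨P, Q, hlPQ⟩ := mem_edgeList_iff.mp hxy
  have hxl : x ∈ l := by rw [hlPQ]; simp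
  have hyl : y ∈ l := by rw [hlPQ]; simp
  have hxS : x ∈ (S : Set Pt) := by rw [← hS]; exact List.mem_toFinset.mpr hxl
  have hyS : y ∈ (S : Set Pt) := by rw [← hS]; exact List.mem_toFinset.mpr hyl
  have hdxy : det3 a b x - det3 a b y ≠ 0 := by
    intro h
    have : det3 a b x = det3 a b y := by linarith
    rw [this] at hd
    nlinarith [sq_nonneg (det3 a b y)]
  set t : ℝ := det3 a b x / (det3 a b x - det3 a b y) with ht
  have htI : 0 < t ∧ t < 1 := by
    rcases mul_neg_iff.mp hd with ⟨h1, h2⟩ | ⟨h1, h2⟩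
    · constructor
      · exact div_pos h1 (by linarith)
      · rw [div_lt_one (by linarith)]; linarith
    · constructor
      · exact div_pos_of_neg_of_neg h1 (by linarith)
      · rw [div_lt_one_of_neg (by linarith)]; linarith
  obtain ⟨z, hz⟩ : ∃ z : Pt, z = (1 - t) • x + t • y := ⟨_, rfl⟩
  have hz0 : det3 a b z = 0 := by
    rw [hz, det3_comb, ht]
    field_simp
    ring
  have hzseg : z ∈ segment ℝ x y := ⟨1 - t, t, by linarith [htI.2], le_of_lt htI.1, by ring, hz.symm⟩
  have hzc : z ∈ convexHull ℝ (S : Set Pt) := segment_subset_convexHull hxS hyS hzseg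
  have hzab : z ∈ segment ℝ a b := mem_seg_of_det3_zero hab hav hbv hzc hz0
  have hfinal : z ∈ ({x, y} : Set Pt) := by
    rcases hedge with h | h
    · have hne : (x, y) ≠ (a, b) := by
        intro hEq
        rw [Prod.ext_iff] at hEq
        have hxa : x = a := hEq.1
        rw [hxa] at hx0
        exact hx0 (det3_aa a b)
      have := hplane (x, y) hxy (a, b) h hne ⟨hzseg, hzab⟩
      exact this.1
    · have hne : (x, y) ≠ (b, a) := by
        intro hEq
        rw [Prod.ext_iff] at hEq
        have hxb : x = b := hEq.1
        rw [hxb] at hx0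
        exact hx0 (det3_bb a b)
      have hzba : z ∈ segment ℝ b a := by rw [segment_symm]; exact hzab
      have := hplane (x, y) hxy (b, a) h hne ⟨hzseg, hzba⟩
      exact this.1
  rcases hfinal with h | h
  · rw [h] at hz0; exact hx0 hz0
  · rw [Set.mem_singleton_iff] at h
    rw [h] at hz0
    exact hy0 hz0

lemma core (S : Finset Pt) (hgp : GenPos S) (a b : Pt) (ha : a ∈ S) (hb : b ∈ S)
    (hab : a ≠ b) (hav : HullVertex S a) (hbv : HullVertex S b)
    (h3 : (S.filter (fun p => 0 < det3 a b p)).card = 3)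
    (h1 : 1 ≤ (S.filter (fun p => det3 a b p < 0)).card) :
    ¬ ∃ l₁ l₂ : List Pt, PlanePath S l₁ ∧ PlanePath S l₂ ∧ SharesExactly a b l₁ l₂ := by
  rintro ⟨l₁, l₂, hp1, hp2, he1, he2, hsh⟩
  have hne : ∀ p ∈ S, p ≠ a → p ≠ b → det3 a b p ≠ 0 := by
    intro p hp hpa hpb h0
    exact hgp a ha b hb p hp hab (Ne.symm hpa) (Ne.symm hpb) (collinear_of_det3 hab h0)
  have hLne : ∃ p ∈ S, 0 < det3 a b p := by
    have : (S.filter (fun p => 0 < det3 a b p)).Nonempty := by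
      rw [← Finset.card_pos, h3]; norm_num
    obtain ⟨p, hp⟩ := this
    rw [Finset.mem_filter] at hp
    exact ⟨p, hp.1, hp.2⟩
  have hRne : ∃ p ∈ S, det3 a b p < 0 := by
    have : (S.filter (fun p => det3 a b p < 0)).Nonempty := Finset.card_pos.mp (by omega)
    obtain ⟨p, hp⟩ := this
    rw [Finset.mem_filter] at hp
    exact ⟨p, hp.1, hp.2⟩
  obtain ⟨m₁, hm₁S, hm₁p, hm₁⟩ := block hp1.1 hp1.2.1 he1
    (no_cross hp1 he1 hab hav hbv) hne hLne hRne h3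
  obtain ⟨m₂, hm₂S, hm₂p, hm₂⟩ := block hp2.1 hp2.2.1 he2
    (no_cross hp2 he2 hab hav hbv) hne hLne hRne h3
  have key : ∃ x y : Pt, IsEdgeOf x y l₁ ∧ IsEdgeOf x y l₂ ∧ 0 < det3 a b x := by
    by_cases hmm : m₁ = m₂
    · subst hmm
      have hm₁L : m₁ ∈ S.filter (fun p => 0 < det3 a b p) :=
        Finset.mem_filter.mpr ⟨hm₁S, hm₁p⟩
      have hcard : 0 < ((S.filter (fun p => 0 < det3 a b p)).erase m₁).card := by
        rw [Finset.card_erase_of_mem hm₁L, h3]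
        norm_num
      obtain ⟨x, hx⟩ := Finset.card_pos.mp hcard
      obtain ⟨hxm, hxL⟩ := Finset.mem_erase.mp hx
      obtain ⟨hxS, hxp⟩ := Finset.mem_filter.mp hxL
      exact ⟨m₁, x, hm₁ x hxS hxp hxm, hm₂ x hxS hxp hxm, hm₁p⟩
    · exact ⟨m₁, m₂, hm₁ m₂ hm₂S hm₂p (Ne.symm hmm),
        Or.symm (hm₂ m₁ hm₁S hm₁p hmm), hm₁p⟩
  obtain ⟨x, y, e1, e2, hxp⟩ := key
  have hset := hsh x y e1 e2
  have hx : x ∈ ({a, b} : Set Pt) := by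
    rw [← hset]; exact Set.mem_insert x {y}
  rcases hx with rfl | hx
  · rw [det3_aa] at hxp; exact lt_irrefl 0 hxp
  · rw [Set.mem_singleton_iff] at hx
    rw [hx, det3_bb] at hxp; exact lt_irrefl 0 hxp

/-- If `a, b` are hull vertices such that one open halfplane of `ℓ(ab)`
contains exactly 3 points of `S` and the other at least 1, then no two plane Hamiltonian
paths on `S` share exactly the edge `ab`. -/
theorem stmt_10 (S : Finset Pt) (hgp : GenPos S)
    (a b : Pt) (ha : a ∈ S) (hb : b ∈ S) (hab : a ≠ b)
    (hav : HullVertex S a) (hbv : HullVertex S b)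
    (hcount :
      ((S.filter (fun p => 0 < det3 a b p)).card = 3 ∧
        1 ≤ (S.filter (fun p => det3 a b p < 0)).card) ∨
      ((S.filter (fun p => det3 a b p < 0)).card = 3 ∧
        1 ≤ (S.filter (fun p => 0 < det3 a b p)).card)) :
    ¬ ∃ l₁ l₂ : List Pt, PlanePath S l₁ ∧ PlanePath S l₂ ∧ SharesExactly a b l₁ l₂ := by
  rcases hcount with ⟨h3, h1⟩ | ⟨h3, h1⟩
  · exact core S hgp a b ha hb hab hav hbv h3 h1
  · rintro ⟨l₁, l₂, hp1, hp2, hsh⟩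
    have hfilt1 : S.filter (fun p => 0 < det3 b a p) = S.filter (fun p => det3 a b p < 0) := by
      apply Finset.filter_congr
      intro p _
      rw [det3_swap]
      exact neg_pos
    have hfilt2 : S.filter (fun p => det3 b a p < 0) = S.filter (fun p => 0 < det3 a b p) := by
      apply Finset.filter_congr
      intro p _
      rw [det3_swap]
      exact neg_lt_zero
    have hsh' : SharesExactly b a l₁ l₂ := by
      obtain ⟨e1, e2, h⟩ := hsh
      exact ⟨Or.symm e1, Or.symm e2, fun x y hx hy => by rw [h x y hx hy, Set.pair_comm]⟩
    exact core S hgp b a hb ha (Ne.symm hab) hbv hav (hfilt1.symm ▸ h3) (hfilt2.symm ▸ h1)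
      ⟨l₁, l₂, hp1, hp2, hsh'⟩
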